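/- Let S be a system of paths labeled by A ⊂ ℕ and let i ∈ A. Path i appears on the upper envelope of S if and only if some initial segment of the local sequence of path i contains every element of A_i^+ = {j ∈ A : j > i} an odd number of times and every element of A_i^- = {j ∈ A : j < i} an even number of times. The analogous statement holds for the lower envelope with the roles of A_i^+ and A_i^- interchanged. -/

import Mathlib

noncomputable section

/-- A function `g` changes sign at `t`. -/
def SignChangeAt (g : ℝ → ℝ) (t : ℝ) : Prop :=
  ∃ ε > (0 : ℝ),
    ((∀ s ∈ Set.Ioo (t - ε) t, g s < 0) ∧ (∀ s ∈ Set.Ioo t (t + ε), 0 < g s)) ∨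
    ((∀ s ∈ Set.Ioo (t - ε) t, 0 < g s) ∧ (∀ s ∈ Set.Ioo t (t + ε), g s < 0))

/-- A system of at least three paths (graphs of continuous functions on `[0,1]`):
distinct endpoints, finite pairwise intersections, all of which are crossings,
and no triple intersection points. -/
structure PathSystem (m : ℕ) where
  f : Fin m → ℝ → ℝ
  size_ge : 3 ≤ m
  cont : ∀ i, ContinuousOn (f i) (Set.Icc 0 1)
  endpoints0 : ∀ i j : Fin m, i ≠ j → f i 0 ≠ f j 0
  endpoints1 : ∀ i j : Fin m, i ≠ j → f i 1 ≠ f j 1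
  finite_meet : ∀ i j : Fin m, i ≠ j → {t : ℝ | t ∈ Set.Icc (0:ℝ) 1 ∧ f i t = f j t}.Finite
  crossing : ∀ i j : Fin m, i ≠ j → ∀ t ∈ Set.Icc (0:ℝ) 1, f i t = f j t →
      SignChangeAt (fun s => f i s - f j s) t
  no_triple : ∀ i j k : Fin m, i ≠ j → i ≠ k → j ≠ k → ∀ t ∈ Set.Icc (0:ℝ) 1,
      ¬(f i t = f j t ∧ f i t = f k t)

/-- The set of parameters where paths `i` and `j` of the system meet (= cross). -/
def meetSet {m : ℕ} (S : PathSystem m) (i j : Fin m) : Set ℝ :=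
  {t : ℝ | t ∈ Set.Icc (0:ℝ) 1 ∧ S.f i t = S.f j t}

/-- Each pair of paths crosses at least once and at most `k` times. -/
def KCrossing {m : ℕ} (S : PathSystem m) (k : ℕ) : Prop :=
  ∀ i j : Fin m, i ≠ j → 1 ≤ (meetSet S i j).ncard ∧ (meetSet S i j).ncard ≤ k

/-- Path `i` appears on the upper envelope of the system. -/
def OnUpperEnv {m : ℕ} (S : PathSystem m) (i : Fin m) : Prop :=
  ∃ t ∈ Set.Icc (0:ℝ) 1, ∀ j : Fin m, j ≠ i → S.f j t < S.f i t

/-- Path `i` appears on the lower envelope of the system. -/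
def OnLowerEnv {m : ℕ} (S : PathSystem m) (i : Fin m) : Prop :=
  ∃ t ∈ Set.Icc (0:ℝ) 1, ∀ j : Fin m, j ≠ i → S.f i t < S.f j t

/-- The subsystem of `S` on the index set `s` is upper convex. -/
def UpperConvexOn {m : ℕ} (S : PathSystem m) (s : Finset (Fin m)) : Prop :=
  ∀ i ∈ s, ∃ t ∈ Set.Icc (0:ℝ) 1, ∀ j ∈ s, j ≠ i → S.f j t < S.f i t

/-- The subsystem of `S` on the index set `s` is lower convex. -/
def LowerConvexOn {m : ℕ} (S : PathSystem m) (s : Finset (Fin m)) : Prop :=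
  ∀ i ∈ s, ∃ t ∈ Set.Icc (0:ℝ) 1, ∀ j ∈ s, j ≠ i → S.f i t < S.f j t

/-- The three-letter ordered alphabet `x ≺ y ≺ z` used for signatures. -/
inductive XYZ : Type
  | x | y | z
deriving DecidableEq

/-- The signature of the size-3 subsystem on paths `i, j, k`, where the labels are
ordered by the values at `0` (bottom to top): the word on `{x,y,z}` listing the
crossings from left to right, `x` for an `{i,j}`-crossing, `y` for an `{i,k}`-crossing
and `z` for a `{j,k}`-crossing. -/
noncomputable def signature3 {m : ℕ} (S : PathSystem m) (i j k : Fin m)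
    (h1 : S.f i 0 < S.f j 0) (h2 : S.f j 0 < S.f k 0) : List XYZ :=
  (Finset.sort
      (((S.finite_meet i j (by intro h; subst h; exact lt_irrefl _ h1)).toFinset ∪
        (S.finite_meet i k (by intro h; subst h; exact lt_irrefl _ (h1.trans h2))).toFinset) ∪
        (S.finite_meet j k (by intro h; subst h; exact lt_irrefl _ h2)).toFinset) (· ≤ ·)).map
    (fun t => if S.f i t = S.f j t then XYZ.x else if S.f i t = S.f k t then XYZ.y else XYZ.z)

/-- `σ` is the common (nonempty) signature of all size-3 subsystems of `S`. -/
def RegularSig {m : ℕ} (S : PathSystem m) (σ : List XYZ) : Prop :=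
  σ ≠ [] ∧ ∀ (i j k : Fin m) (h1 : S.f i 0 < S.f j 0) (h2 : S.f j 0 < S.f k 0),
    signature3 S i j k h1 h2 = σ

/-- A regular system: size at least 4, and all size-3 subsystems have the same
nonempty signature. -/
def IsRegularSystem {m : ℕ} (S : PathSystem m) : Prop :=
  4 ≤ m ∧ ∃ σ : List XYZ, RegularSig S σ

/-- A system labeled by `[m]`: indices increase with the order of the left endpoints. -/
structure LabeledPathSystem (m : ℕ) extends PathSystem m where
  mono0 : ∀ i j : Fin m, i < j → f i 0 < f j 0

/-- Signature of the size-3 subsystem on `i < j < k` of a labeled system. -/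
noncomputable def lsig {m : ℕ} (S : LabeledPathSystem m) (i j k : Fin m)
    (h1 : i < j) (h2 : j < k) : List XYZ :=
  signature3 S.toPathSystem i j k (S.mono0 i j h1) (S.mono0 j k h2)

/-- `σ` is the common nonempty signature of all size-3 subsystems of the labeled
system `S`. -/
def SystemSignatureL {m : ℕ} (S : LabeledPathSystem m) (σ : List XYZ) : Prop :=
  σ ≠ [] ∧ ∀ (i j k : Fin m) (h1 : i < j) (h2 : j < k), lsig S i j k h1 h2 = σ

/-- The signature of a labeled system of three paths. -/
noncomputable def sig3 (S : LabeledPathSystem 3) : List XYZ :=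
  lsig S 0 1 2 (by decide) (by decide)

/-- The set of parameters where path `i` meets some other path. -/
def crossTimes {m : ℕ} (S : PathSystem m) (i : Fin m) : Set ℝ :=
  {t : ℝ | t ∈ Set.Icc (0:ℝ) 1 ∧ ∃ j : Fin m, j ≠ i ∧ S.f j t = S.f i t}

lemma crossTimes_finite {m : ℕ} (S : PathSystem m) (i : Fin m) :
    (crossTimes S i).Finite := by
  have hsub : crossTimes S i ⊆
      ⋃ j : Fin m, {t : ℝ | (t ∈ Set.Icc (0:ℝ) 1 ∧ S.f j t = S.f i t) ∧ j ≠ i} := by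
    rintro t ⟨ht, j, hj, he⟩
    exact Set.mem_iUnion.2 ⟨j, ⟨ht, he⟩, hj⟩
  refine Set.Finite.subset (Set.finite_iUnion fun j => ?_) hsub
  by_cases hj : j = i
  · subst hj
    have h0 : {t : ℝ | (t ∈ Set.Icc (0:ℝ) 1 ∧ S.f j t = S.f j t) ∧ j ≠ j} = ∅ := by
      ext t; simp
    rw [h0]; exact Set.finite_empty
  · exact (S.finite_meet j i hj).subset fun t ht => ht.1

/-- The local sequence of path `i`: the labels of the other paths in the order in
which path `i` meets them from left to right. -/
noncomputable def localSeq {m : ℕ} (S : PathSystem m) (i : Fin m) : List (Fin m) :=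
  (Finset.sort (crossTimes_finite S i).toFinset (· ≤ ·)).map fun t =>
    if h : ∃ j : Fin m, j ≠ i ∧ S.f j t = S.f i t then h.choose else i

/-- The tableau associated to a labeled system: row `r` (for `1 ≤ r ≤ m`) is the
local sequence of path `r` written with the (1-based) labels. -/
noncomputable def assocTab {m : ℕ} (S : LabeledPathSystem m) : ℕ → List ℕ :=
  fun r => if h : 1 ≤ r ∧ r ≤ m then
      (localSeq S.toPathSystem ⟨r - 1, by omega⟩).map (fun j => (j : ℕ) + 1)
    else []

/-- A nonempty word on `{x,y,z}` is irreducible if no nonempty proper prefix contains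
equally many `x`'s, `y`'s and `z`'s. -/
def IrreducibleXYZ (σ : List XYZ) : Prop :=
  σ ≠ [] ∧ ∀ p : ℕ, 0 < p → p < σ.length →
    ¬((σ.take p).count XYZ.x = (σ.take p).count XYZ.y ∧
      (σ.take p).count XYZ.y = (σ.take p).count XYZ.z)



/-! ### Auxiliary lemmas for `onEnv_iff_localSeq` -/

private lemma same_sign_of_no_zero (g : ℝ → ℝ) (a b : ℝ) (hab : a ≤ b)
    (hc : ContinuousOn g (Set.Icc a b)) (h : ∀ s ∈ Set.Icc a b, g s ≠ 0) :
    (g a < 0 ↔ g b < 0) := by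
  have ha : a ∈ Set.Icc a b := ⟨le_refl a, hab⟩
  have hb : b ∈ Set.Icc a b := ⟨hab, le_refl b⟩
  constructor
  · intro hga
    by_contra hgb
    have hgb' : 0 < g b := lt_of_le_of_ne (not_lt.mp hgb) (Ne.symm (h b hb))
    obtain ⟨s, hs, hgs⟩ := intermediate_value_Ioo hab hc (Set.mem_Ioo.mpr ⟨hga, hgb'⟩)
    exact h s (Set.Ioo_subset_Icc_self hs) hgs
  · intro hgb
    by_contra hga
    have hga' : 0 < g a := lt_of_le_of_ne (not_lt.mp hga) (Ne.symm (h a ha))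
    obtain ⟨s, hs, hgs⟩ := intermediate_value_Ioo' hab hc (Set.mem_Ioo.mpr ⟨hgb, hga'⟩)
    exact h s (Set.Ioo_subset_Icc_self hs) hgs

private lemma parity_main (g : ℝ → ℝ) (hc : ContinuousOn g (Set.Icc 0 1))
    (hfin : {t : ℝ | t ∈ Set.Icc (0:ℝ) 1 ∧ g t = 0}.Finite)
    (hcross : ∀ t ∈ Set.Icc (0:ℝ) 1, g t = 0 → SignChangeAt g t) :
    ∀ (n : ℕ) (b a : ℝ), a ∈ Set.Icc (0:ℝ) 1 → b ∈ Set.Icc (0:ℝ) 1 → a ≤ b →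
    g a ≠ 0 → g b ≠ 0 →
    ({t : ℝ | t ∈ Set.Icc (0:ℝ) 1 ∧ g t = 0} ∩ Set.Ioo a b).ncard = n →
    ((g a < 0 ↔ g b < 0) ↔ Even n) := by
  set Z := {t : ℝ | t ∈ Set.Icc (0:ℝ) 1 ∧ g t = 0} with hZ
  intro n
  induction n with
  | zero =>
    intro b a ha hb hab hga hgb hcard
    have hfin' : (Z ∩ Set.Ioo a b).Finite := hfin.inter_of_left _
    have hempty : Z ∩ Set.Ioo a b = ∅ := (Set.ncard_eq_zero hfin').mp hcard
    have hicc : Set.Icc a b ⊆ Set.Icc (0:ℝ) 1 := Set.Icc_subset_Icc ha.1 hb.2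
    have hnz : ∀ s ∈ Set.Icc a b, g s ≠ 0 := by
      intro s hs hgs
      rcases eq_or_lt_of_le hs.1 with h1 | h1
      · exact hga (h1 ▸ hgs)
      rcases eq_or_lt_of_le hs.2 with h2 | h2
      · exact hgb (h2 ▸ hgs)
      have : s ∈ Z ∩ Set.Ioo a b := ⟨⟨hicc hs, hgs⟩, h1, h2⟩
      simp [hempty] at this
    simpa [Nat.even_iff] using same_sign_of_no_zero g a b hab (hc.mono hicc) hnz
  | succ n ih =>
    intro b a ha hb hab hga hgb hcard
    have hfin' : (Z ∩ Set.Ioo a b).Finite := hfin.inter_of_left _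
    have hne : (Z ∩ Set.Ioo a b).Nonempty :=
      Set.nonempty_of_ncard_ne_zero (by omega)
    have hne' : hfin'.toFinset.Nonempty := by
      rwa [← Set.Finite.toFinset_nonempty hfin'] at hne
    set z := hfin'.toFinset.min' hne' with hzdef
    have hzmem : z ∈ Z ∩ Set.Ioo a b := by
      have := hfin'.toFinset.min'_mem hne'
      rwa [Set.Finite.mem_toFinset] at this
    have hzmin : ∀ s ∈ Z ∩ Set.Ioo a b, z ≤ s := by
      intro s hs
      exact hfin'.toFinset.min'_le s ((Set.Finite.mem_toFinset hfin').mpr hs)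
    obtain ⟨⟨hz01, hgz⟩, haz, hzb⟩ := hzmem
    obtain ⟨ε, hε, Hbr⟩ := hcross z hz01 hgz
    set s1 := max a (z - ε) with hs1
    have hs1z : s1 < z := max_lt haz (by linarith)
    set w1 := (s1 + z) / 2 with hw1
    have hw1a : a < w1 := by
      have : a ≤ s1 := le_max_left _ _
      have := hs1z
      simp only [hw1]; linarith
    have hw1z : w1 < z := by simp only [hw1]; linarith
    have hw1e : z - ε < w1 := by
      have : z - ε ≤ s1 := le_max_right _ _
      simp only [hw1]; linarith
    have hicc : Set.Icc a b ⊆ Set.Icc (0:ℝ) 1 := Set.Icc_subset_Icc ha.1 hb.2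
    have hnz1 : ∀ s ∈ Set.Icc a w1, g s ≠ 0 := by
      intro s hs hgs
      rcases eq_or_lt_of_le hs.1 with h1 | h1
      · exact hga (h1 ▸ hgs)
      have hsb : s < b := lt_trans (lt_of_le_of_lt hs.2 hw1z) hzb
      have hs01 : s ∈ Set.Icc (0:ℝ) 1 := by
        constructor <;> [linarith [ha.1, hs.1]; linarith [hb.2, hs.2, hw1z, hzb]]
      have hsmem : s ∈ Z ∩ Set.Ioo a b := ⟨⟨hs01, hgs⟩, h1, hsb⟩
      exact absurd (hzmin s hsmem) (not_le.mpr (lt_of_le_of_lt hs.2 hw1z))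
    have hsame1 : g a < 0 ↔ g w1 < 0 :=
      same_sign_of_no_zero g a w1 hw1a.le
        (hc.mono (Set.Icc_subset_Icc ha.1 (le_trans (hw1z.le.trans hzb.le) hb.2))) hnz1
    set rest := (Z ∩ Set.Ioo a b) \ {z} with hrest
    have hrestcard : rest.ncard = n := by
      have h := Set.ncard_diff_singleton_add_one (a := z) (s := Z ∩ Set.Ioo a b)
        ⟨⟨hz01, hgz⟩, haz, hzb⟩ hfin'
      rw [hrest]
      omega
    have hrfin : rest.Finite := hfin'.diff
    set w' : ℝ := sInf (insert b rest) with hw'def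
    have hw'mem : w' ∈ insert b rest :=
      (Set.insert_nonempty b rest).csInf_mem (hrfin.insert b)
    have hzw' : z < w' := by
      rcases hw'mem with h | h
      · rw [hw'def.trans h]; exact hzb
      · exact lt_of_le_of_ne (hzmin _ h.1) (Ne.symm h.2)
    have hw'le : ∀ s ∈ rest, w' ≤ s := fun s hs =>
      csInf_le (hrfin.insert b).bddBelow (Set.mem_insert_of_mem b hs)
    set u := min b (min (z + ε) w') with hu
    have hzu : z < u := lt_min hzb (lt_min (by linarith) hzw')
    set c := (z + u) / 2 with hcdef
    have hzc : z < c := by simp only [hcdef]; linarith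
    have hcu : c < u := by simp only [hcdef]; linarith
    have hcb : c < b := lt_of_lt_of_le hcu (min_le_left _ _)
    have hce : c < z + ε := lt_of_lt_of_le hcu (le_trans (min_le_right _ _) (min_le_left _ _))
    have hcw' : c < w' := lt_of_lt_of_le hcu (le_trans (min_le_right _ _) (min_le_right _ _))
    have hc01 : c ∈ Set.Icc (0:ℝ) 1 := ⟨le_trans hz01.1 hzc.le, le_trans hcb.le hb.2⟩
    have hZcb : Z ∩ Set.Ioo c b = rest := by
      ext s
      constructor
      · rintro ⟨hsZ, hcs, hsb⟩
        exact ⟨⟨hsZ, lt_trans haz (lt_trans hzc hcs), hsb⟩,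
          fun hsz => absurd (hsz ▸ hcs) (not_lt.mpr (hsz ▸ hzc.le))⟩
      · rintro ⟨⟨hsZ, has, hsb⟩, hsz⟩
        exact ⟨hsZ, lt_of_lt_of_le hcw' (hw'le s ⟨⟨hsZ, has, hsb⟩, hsz⟩), hsb⟩
    have hw1mem : w1 ∈ Set.Ioo (z - ε) z := ⟨hw1e, hw1z⟩
    have hcmem : c ∈ Set.Ioo z (z + ε) := ⟨hzc, hce⟩
    have hopp : ((g a < 0) ↔ ¬ (g c < 0)) ∧ g c ≠ 0 := by
      rcases Hbr with ⟨hneg, hpos⟩ | ⟨hpos, hneg⟩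
      · have h1 : g w1 < 0 := hneg w1 hw1mem
        have h2 : 0 < g c := hpos c hcmem
        exact ⟨by constructor <;> intro <;> [exact not_lt.mpr h2.le; exact hsame1.mpr h1],
          ne_of_gt h2⟩
      · have h1 : 0 < g w1 := hpos w1 hw1mem
        have h2 : g c < 0 := hneg c hcmem
        refine ⟨⟨fun hga' => absurd (hsame1.mp hga') (not_lt.mpr h1.le),
          fun hnc => absurd h2 hnc⟩, ne_of_lt h2⟩
    have hIH := ih b c hc01 hb hcb.le hopp.2 hgb (by rw [hZcb]; exact hrestcard)
    rw [Nat.even_add_one]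
    tauto

private lemma filter_lt_eq_take (t : ℝ) (L : List ℝ) (hL : L.Pairwise (· ≤ ·)) :
    L.filter (fun s => decide (s < t)) = L.take (L.countP (fun s => decide (s < t))) := by
  induction L with
  | nil => rfl
  | cons x xs ih =>
    rw [List.filter_cons, List.countP_cons]
    by_cases hx : x < t
    · simp [hx, List.take_succ_cons, ih hL.of_cons]
    · have hall : ∀ y ∈ xs, ¬ y < t := fun y hy hyt =>
        hx (lt_of_le_of_lt (List.rel_of_pairwise_cons hL hy) hyt)
      have h0 : xs.countP (fun s => decide (s < t)) = 0 :=
        List.countP_eq_zero.mpr (by simpa using hall)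
      have hf : xs.filter (fun s => decide (s < t)) = [] :=
        List.filter_eq_nil_iff.mpr (by simpa using hall)
      simp [hx, h0, hf]

private lemma take_eq_filter (L : List ℝ) (q : ℝ → Bool) (p : ℕ)
    (h1 : ∀ x ∈ L.take p, q x = true) (h2 : ∀ x ∈ L.drop p, q x = false) :
    L.filter q = L.take p := by
  conv_lhs => rw [← List.take_append_drop p L]
  rw [List.filter_append, List.filter_eq_self.mpr h1,
    List.filter_eq_nil_iff.mpr (by intro a ha; simp [h2 a ha]), List.append_nil]

private lemma meet_unique {m : ℕ} (S : PathSystem m) (i : Fin m) (t : ℝ)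
    (ht : t ∈ Set.Icc (0:ℝ) 1) {j k : Fin m} (hj : j ≠ i) (hk : k ≠ i)
    (hjt : S.f j t = S.f i t) (hkt : S.f k t = S.f i t) : j = k := by
  by_contra hne
  exact S.no_triple i j k (Ne.symm hj) (Ne.symm hk) hne t ht ⟨hjt.symm, hkt.symm⟩

private lemma mem_cross_sort {m : ℕ} (S : PathSystem m) (i : Fin m) {s : ℝ} :
    s ∈ Finset.sort (crossTimes_finite S i).toFinset (· ≤ ·) ↔ s ∈ crossTimes S i := by
  rw [Finset.mem_sort, Set.Finite.mem_toFinset]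

private lemma localSeq_count {m : ℕ} (S : PathSystem m) (i : Fin m) (p : ℕ) {j : Fin m}
    (hj : j ≠ i) :
    ((localSeq S i).take p).count j =
      ((Finset.sort (crossTimes_finite S i).toFinset (· ≤ ·)).take p).countP
        (fun s => decide (S.f j s = S.f i s)) := by
  unfold localSeq
  rw [← List.map_take, List.count_eq_countP, List.countP_map]
  apply List.countP_congr
  intro s hs
  have hsT : s ∈ crossTimes S i :=
    (mem_cross_sort S i).mp ((List.take_sublist p _).subset hs)
  obtain ⟨hs01, hex⟩ := hsT
  simp only [Function.comp_apply, dif_pos hex, beq_iff_eq, decide_eq_true_eq]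
  constructor
  · intro he
    exact he ▸ hex.choose_spec.2
  · intro he
    exact meet_unique S i s hs01 hex.choose_spec.1 hj hex.choose_spec.2 he

private lemma countP_take_ncard {m : ℕ} (S : PathSystem m) (i : Fin m) {t : ℝ} {p : ℕ}
    (hft : (Finset.sort (crossTimes_finite S i).toFinset (· ≤ ·)).filter
        (fun s => decide (s < t)) =
      (Finset.sort (crossTimes_finite S i).toFinset (· ≤ ·)).take p)
    {j : Fin m} (hj : j ≠ i) :
    ((Finset.sort (crossTimes_finite S i).toFinset (· ≤ ·)).take p).countP
        (fun s => decide (S.f j s = S.f i s)) =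
      ({s : ℝ | s ∈ Set.Icc (0:ℝ) 1 ∧ S.f j s = S.f i s} ∩ Set.Iio t).ncard := by
  rw [← hft, List.countP_filter]
  have hnd : (Finset.sort (crossTimes_finite S i).toFinset (· ≤ ·)).Nodup :=
    Finset.sort_nodup _ _
  rw [List.countP_eq_length_filter, ← List.toFinset_card_of_nodup (hnd.filter _),
    List.toFinset_filter, Finset.sort_toFinset, ← Set.ncard_coe_finset]
  congr 1
  ext s
  simp only [Finset.coe_filter, Set.Finite.mem_toFinset, Set.mem_setOf_eq, Bool.and_eq_true,
    decide_eq_true_eq, Set.mem_inter_iff, Set.mem_Iio]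
  constructor
  · rintro ⟨⟨hs01, -⟩, he, hlt⟩
    exact ⟨⟨hs01, he⟩, hlt⟩
  · rintro ⟨⟨hs01, he⟩, hlt⟩
    exact ⟨⟨hs01, j, hj, he⟩, he, hlt⟩

private lemma count_take {m : ℕ} (S : PathSystem m) (i : Fin m) {t : ℝ} {p : ℕ}
    (hft : (Finset.sort (crossTimes_finite S i).toFinset (· ≤ ·)).filter
        (fun s => decide (s < t)) =
      (Finset.sort (crossTimes_finite S i).toFinset (· ≤ ·)).take p)
    {j : Fin m} (hj : j ≠ i) :
    ((localSeq S i).take p).count j =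
      ({s : ℝ | s ∈ Set.Icc (0:ℝ) 1 ∧ S.f j s = S.f i s} ∩ Set.Iio t).ncard :=
  (localSeq_count S i p hj).trans (countP_take_ncard S i hft hj)

private lemma sign_iff {m : ℕ} (S : PathSystem m) (i j : Fin m) (hj : j ≠ i) (t : ℝ)
    (ht : t ∈ Set.Icc (0:ℝ) 1) (htT : t ∉ crossTimes S i) :
    ((S.f j 0 < S.f i 0) ↔ (S.f j t < S.f i t)) ↔
      Even (({s : ℝ | s ∈ Set.Icc (0:ℝ) 1 ∧ S.f j s = S.f i s} ∩ Set.Iio t).ncard) := by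
  set g : ℝ → ℝ := fun s => S.f j s - S.f i s with hg
  have hZeq : {s : ℝ | s ∈ Set.Icc (0:ℝ) 1 ∧ g s = 0} =
      {s : ℝ | s ∈ Set.Icc (0:ℝ) 1 ∧ S.f j s = S.f i s} := by
    ext s; simp [hg, sub_eq_zero]
  have hfin : {s : ℝ | s ∈ Set.Icc (0:ℝ) 1 ∧ g s = 0}.Finite := by
    rw [hZeq]; exact S.finite_meet j i hj
  have hcont : ContinuousOn g (Set.Icc 0 1) := (S.cont j).sub (S.cont i)
  have hcross : ∀ s ∈ Set.Icc (0:ℝ) 1, g s = 0 → SignChangeAt g s := fun s hs hgs =>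
    S.crossing j i hj s hs (sub_eq_zero.mp hgs)
  have hg0 : g 0 ≠ 0 := sub_ne_zero.mpr (S.endpoints0 j i hj)
  have hgt : g t ≠ 0 := sub_ne_zero.mpr (fun he => htT ⟨ht, j, hj, he⟩)
  have hIoo : {s : ℝ | s ∈ Set.Icc (0:ℝ) 1 ∧ g s = 0} ∩ Set.Ioo 0 t =
      {s : ℝ | s ∈ Set.Icc (0:ℝ) 1 ∧ S.f j s = S.f i s} ∩ Set.Iio t := by
    rw [hZeq]
    ext s
    simp only [Set.mem_inter_iff, Set.mem_setOf_eq, Set.mem_Ioo, Set.mem_Iio]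
    constructor
    · rintro ⟨hsZ, h0s, hst⟩; exact ⟨hsZ, hst⟩
    · rintro ⟨hsZ, hst⟩
      refine ⟨hsZ, lt_of_le_of_ne hsZ.1.1 ?_, hst⟩
      intro h0
      exact S.endpoints0 j i hj (h0 ▸ hsZ.2)
  have hpar := parity_main g hcont hfin hcross
    (({s : ℝ | s ∈ Set.Icc (0:ℝ) 1 ∧ g s = 0} ∩ Set.Ioo 0 t).ncard) t 0
    ⟨le_refl 0, zero_le_one⟩ ht ht.1 hg0 hgt rfl
  rw [hIoo] at hpar
  have h1 : g 0 < 0 ↔ S.f j 0 < S.f i 0 := sub_neg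
  have h2 : g t < 0 ↔ S.f j t < S.f i t := sub_neg
  rw [h1, h2] at hpar
  exact hpar

private lemma exists_cut {m : ℕ} (S : PathSystem m) (i : Fin m) (p : ℕ) :
    ∃ t, t ∈ Set.Icc (0:ℝ) 1 ∧ t ∉ crossTimes S i ∧
      (Finset.sort (crossTimes_finite S i).toFinset (· ≤ ·)).filter
          (fun s => decide (s < t)) =
        (Finset.sort (crossTimes_finite S i).toFinset (· ≤ ·)).take p := by
  set L := Finset.sort (crossTimes_finite S i).toFinset (· ≤ ·) with hLdef
  have hmem : ∀ s ∈ L, s ∈ crossTimes S i := fun s hs => (mem_cross_sort S i).mp hs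
  have hIcc : ∀ s ∈ L, s ∈ Set.Icc (0:ℝ) 1 := fun s hs => (hmem s hs).1
  have hlt : L.SortedLT := Finset.sortedLT_sort _
  have h0T : (0:ℝ) ∉ crossTimes S i := by
    rintro ⟨-, j, hjne, he⟩
    exact S.endpoints0 j i hjne he
  have h1T : (1:ℝ) ∉ crossTimes S i := by
    rintro ⟨-, j, hjne, he⟩
    exact S.endpoints1 j i hjne he
  by_cases hp0 : p = 0
  · refine ⟨0, ⟨le_refl 0, zero_le_one⟩, h0T, ?_⟩
    subst hp0
    rw [List.take_zero]
    apply List.filter_eq_nil_iff.mpr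
    intro a ha
    simpa using not_lt.mpr (hIcc a ha).1
  by_cases hplen : L.length ≤ p
  · refine ⟨1, ⟨zero_le_one, le_refl 1⟩, h1T, ?_⟩
    rw [List.take_of_length_le hplen]
    apply List.filter_eq_self.mpr
    intro a ha
    simpa using lt_of_le_of_ne (hIcc a ha).2 (fun h => h1T (h ▸ hmem a ha))
  · push_neg at hplen
    have hp1 : p - 1 < L.length := by omega
    set v := L.get ⟨p - 1, hp1⟩ with hvdef
    set u := L.get ⟨p, hplen⟩ with hudef
    have hvu : v < u := hlt.strictMono_get (by simp [Fin.lt_def]; omega)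
    set t := (v + u) / 2 with htdef
    have hvt : v < t := by simp only [htdef]; linarith
    have htu : t < u := by simp only [htdef]; linarith
    have hv01 : v ∈ Set.Icc (0:ℝ) 1 := hIcc v (List.get_mem L ⟨p - 1, hp1⟩)
    have hu01 : u ∈ Set.Icc (0:ℝ) 1 := hIcc u (List.get_mem L ⟨p, hplen⟩)
    have ht01 : t ∈ Set.Icc (0:ℝ) 1 := ⟨le_trans hv01.1 hvt.le, le_trans htu.le hu01.2⟩
    -- every element of `L` with index < p is ≤ v, with index ≥ p is ≥ u
    have hle_v : ∀ (k : ℕ) (hk : k < L.length), k < p → L.get ⟨k, hk⟩ ≤ v := by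
      intro k hk hkp
      rcases eq_or_lt_of_le (Nat.le_sub_one_of_lt hkp) with h | h
      · exact le_of_eq (by rw [hvdef]; congr 1; exact Fin.ext h)
      · exact (hlt.strictMono_get (show (⟨k, hk⟩ : Fin L.length) < ⟨p - 1, hp1⟩ from h)).le
    have hge_u : ∀ (k : ℕ) (hk : k < L.length), p ≤ k → u ≤ L.get ⟨k, hk⟩ := by
      intro k hk hkp
      rcases eq_or_lt_of_le hkp with h | h
      · exact le_of_eq (by rw [hudef]; congr 1; exact Fin.ext h)
      · exact (hlt.strictMono_get (show (⟨p, hplen⟩ : Fin L.length) < ⟨k, hk⟩ from h)).le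
    have htT : t ∉ crossTimes S i := by
      intro hT
      have : t ∈ L := (mem_cross_sort S i).mpr hT
      obtain ⟨⟨k, hk⟩, hkt⟩ := List.mem_iff_get.mp this
      rcases lt_or_ge k p with h | h
      · exact absurd (hkt ▸ hle_v k hk h) (not_le.mpr hvt)
      · exact absurd (hkt ▸ hge_u k hk h) (not_le.mpr htu)
    refine ⟨t, ht01, htT, ?_⟩
    apply take_eq_filter
    · intro x hx
      obtain ⟨⟨k, hk⟩, hkx⟩ := List.mem_iff_get.mp hx
      have hklen : k < L.length := lt_of_lt_of_le hk (by simp [List.length_take])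
      have hkp : k < p := by
        have := hk
        simp only [List.length_take] at this
        omega
      have : (L.take p).get ⟨k, hk⟩ = L.get ⟨k, hklen⟩ := by
        simp [List.get_eq_getElem, List.getElem_take]
      rw [this] at hkx
      simpa using lt_of_le_of_lt (hkx ▸ hle_v k hklen hkp) hvt
    · intro x hx
      obtain ⟨⟨k, hk⟩, hkx⟩ := List.mem_iff_get.mp hx
      have hklen : p + k < L.length := by
        have := hk
        simp only [List.length_drop] at this
        omega
      have : (L.drop p).get ⟨k, hk⟩ = L.get ⟨p + k, hklen⟩ := by
        simp [List.get_eq_getElem, List.getElem_drop]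
      rw [this] at hkx
      have : t < x := lt_of_lt_of_le htu (hkx ▸ hge_u (p + k) hklen (Nat.le_add_right p k))
      simpa using not_lt.mpr this.le

/-- **Lemma (envelopes from local sequences).** Path `i` appears on the upper
envelope iff some initial segment of its local sequence contains every path above
`i` an odd number of times and every path below `i` an even number of times; and
analogously for the lower envelope with the roles interchanged.  (Labels increase
with the order of the left endpoints, so `j` is above `i` iff `S.f i 0 < S.f j 0`.) -/
theorem onEnv_iff_localSeq (m : ℕ) (S : PathSystem m) (i : Fin m) :
    (OnUpperEnv S i ↔ ∃ p : ℕ,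
        (∀ j : Fin m, S.f i 0 < S.f j 0 → Odd (((localSeq S i).take p).count j)) ∧
        (∀ j : Fin m, S.f j 0 < S.f i 0 → Even (((localSeq S i).take p).count j))) ∧
    (OnLowerEnv S i ↔ ∃ p : ℕ,
        (∀ j : Fin m, S.f j 0 < S.f i 0 → Odd (((localSeq S i).take p).count j)) ∧
        (∀ j : Fin m, S.f i 0 < S.f j 0 → Even (((localSeq S i).take p).count j))) := by
  constructor
  · -- upper envelope
    constructor
    · rintro ⟨t, ht, hlt⟩
      have htT : t ∉ crossTimes S i := by
        rintro ⟨-, j, hjne, he⟩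
        exact absurd he (ne_of_lt (hlt j hjne))
      have hft := filter_lt_eq_take t
        (Finset.sort (crossTimes_finite S i).toFinset (· ≤ ·)) (Finset.pairwise_sort _ _)
      refine ⟨(Finset.sort (crossTimes_finite S i).toFinset (· ≤ ·)).countP
        (fun s => decide (s < t)), ?_, ?_⟩
      · intro j hij
        have hj : j ≠ i := fun h => absurd hij (by rw [h]; exact lt_irrefl _)
        rw [count_take S i hft hj, ← Nat.not_even_iff_odd]
        intro hev
        exact absurd (((sign_iff S i j hj t ht htT).mpr hev).mpr (hlt j hj))
          (lt_asymm hij)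
      · intro j hji
        have hj : j ≠ i := fun h => absurd hji (by rw [h]; exact lt_irrefl _)
        rw [count_take S i hft hj]
        exact (sign_iff S i j hj t ht htT).mp
          ⟨fun _ => hlt j hj, fun _ => hji⟩
    · rintro ⟨p, hodd, heven⟩
      obtain ⟨t, ht01, htT, hft⟩ := exists_cut S i p
      refine ⟨t, ht01, ?_⟩
      intro j hj
      rcases (S.endpoints0 j i hj).lt_or_gt with hlt0 | hlt0
      · have hev := heven j hlt0
        rw [count_take S i hft hj] at hev
        exact ((sign_iff S i j hj t ht01 htT).mpr hev).mp hlt0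
      · have hod := hodd j hlt0
        rw [count_take S i hft hj] at hod
        by_contra hnot
        have hiff : (S.f j 0 < S.f i 0) ↔ (S.f j t < S.f i t) :=
          ⟨fun h => absurd h (lt_asymm hlt0), fun h => absurd h hnot⟩
        exact (Nat.not_even_iff_odd.mpr hod) ((sign_iff S i j hj t ht01 htT).mp hiff)
  · -- lower envelope
    constructor
    · rintro ⟨t, ht, hlt⟩
      have htT : t ∉ crossTimes S i := by
        rintro ⟨-, j, hjne, he⟩
        exact absurd he.symm (ne_of_lt (hlt j hjne))
      have hft := filter_lt_eq_take t
        (Finset.sort (crossTimes_finite S i).toFinset (· ≤ ·)) (Finset.pairwise_sort _ _)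
      refine ⟨(Finset.sort (crossTimes_finite S i).toFinset (· ≤ ·)).countP
        (fun s => decide (s < t)), ?_, ?_⟩
      · intro j hji
        have hj : j ≠ i := fun h => absurd hji (by rw [h]; exact lt_irrefl _)
        rw [count_take S i hft hj, ← Nat.not_even_iff_odd]
        intro hev
        exact absurd (((sign_iff S i j hj t ht htT).mpr hev).mp hji)
          (lt_asymm (hlt j hj))
      · intro j hij
        have hj : j ≠ i := fun h => absurd hij (by rw [h]; exact lt_irrefl _)
        rw [count_take S i hft hj]
        exact (sign_iff S i j hj t ht htT).mp
          ⟨fun h => absurd h (lt_asymm hij), fun h => absurd h (lt_asymm (hlt j hj))⟩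
    · rintro ⟨p, hodd, heven⟩
      obtain ⟨t, ht01, htT, hft⟩ := exists_cut S i p
      refine ⟨t, ht01, ?_⟩
      intro j hj
      have hne : S.f j t ≠ S.f i t := fun he => htT ⟨ht01, j, hj, he⟩
      rcases (S.endpoints0 j i hj).lt_or_gt with hlt0 | hlt0
      · have hod := hodd j hlt0
        rw [count_take S i hft hj] at hod
        have hnjt : ¬ (S.f j t < S.f i t) := by
          intro hjt
          exact (Nat.not_even_iff_odd.mpr hod)
            ((sign_iff S i j hj t ht01 htT).mp ⟨fun _ => hjt, fun _ => hlt0⟩)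
        exact lt_of_le_of_ne (not_lt.mp hnjt) hne.symm
      · have hev := heven j hlt0
        rw [count_take S i hft hj] at hev
        have hnjt : ¬ (S.f j t < S.f i t) := fun hjt =>
          absurd (((sign_iff S i j hj t ht01 htT).mpr hev).mpr hjt) (lt_asymm hlt0)
        exact lt_of_le_of_ne (not_lt.mp hnjt) hne.symm

end
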